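/- For t ∈ ℝ define v_t : {(x,y) : x > 0} × ℝ → ℝ³ by v_t(x,y) = ( −(coth(√3 x) + (2/√3)cos t)·e^{2(−x cos t + y sin t)}, −(coth(√3 x) − (cos t − √3 sin t)/√3)·e^{(cos t − √3 sin t)x + (−sin t − √3 cos t)y}, −(coth(√3 x) − (cos t + √3 sin t)/√3)·e^{(cos t + √3 sin t)x + (−sin t + √3 cos t)y} ). Then for every t ∈ ℝ, each component of v_t satisfies ∂²v/∂x² + ∂²v/∂y² = (6/sinh²(√3 x) + 4)·v for all x > 0, y ∈ ℝ. -/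

import Mathlib

/-- Real hyperbolic cotangent. -/
noncomputable def coth (x : ℝ) : ℝ := Real.cosh x / Real.sinh x

/-- The associated family (at loop parameter `λ = e^{3it}`) of Hildebrand's case-1
complete hyperbolic affine sphere, up to a constant invertible matrix factor. -/
noncomputable def vt (t x y : ℝ) : Fin 3 → ℝ :=
  ![ -(coth (Real.sqrt 3 * x) + (2 / Real.sqrt 3) * Real.cos t) *
       Real.exp (2 * (-x * Real.cos t + y * Real.sin t)),
     -(coth (Real.sqrt 3 * x) - (Real.cos t - Real.sqrt 3 * Real.sin t) / Real.sqrt 3) *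
       Real.exp ((Real.cos t - Real.sqrt 3 * Real.sin t) * x +
         (-Real.sin t - Real.sqrt 3 * Real.cos t) * y),
     -(coth (Real.sqrt 3 * x) - (Real.cos t + Real.sqrt 3 * Real.sin t) / Real.sqrt 3) *
       Real.exp ((Real.cos t + Real.sqrt 3 * Real.sin t) * x +
         (-Real.sin t + Real.sqrt 3 * Real.cos t) * y) ]

noncomputable def g (a b y s : ℝ) : ℝ :=
  -(coth (Real.sqrt 3 * s) - a / Real.sqrt 3) * Real.exp (a * s + b * y)

lemma sinh_ne (s : ℝ) (hs : 0 < s) : Real.sinh (Real.sqrt 3 * s) ≠ 0 := by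
  have : 0 < Real.sqrt 3 * s := mul_pos (by positivity) hs
  exact ne_of_gt (Real.sinh_pos_iff.2 this)

lemma hg (a b y s : ℝ) (hs : 0 < s) :
    HasDerivAt (fun u => g a b y u)
      (Real.sqrt 3 / (Real.sinh (Real.sqrt 3 * s)) ^ 2 * Real.exp (a * s + b * y)
        + a * g a b y s) s := by
  have hne := sinh_ne s hs
  have hlin : HasDerivAt (fun u : ℝ => Real.sqrt 3 * u) (Real.sqrt 3) s := by
    simpa using (hasDerivAt_id s).const_mul (Real.sqrt 3)
  have hsh : HasDerivAt (fun u => Real.sinh (Real.sqrt 3 * u))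
      (Real.cosh (Real.sqrt 3 * s) * Real.sqrt 3) s :=
    (Real.hasDerivAt_sinh _).comp s hlin
  have hch : HasDerivAt (fun u => Real.cosh (Real.sqrt 3 * u))
      (Real.sinh (Real.sqrt 3 * s) * Real.sqrt 3) s :=
    (Real.hasDerivAt_cosh _).comp s hlin
  have hcoth : HasDerivAt (fun u => coth (Real.sqrt 3 * u))
      (-(Real.sqrt 3 / (Real.sinh (Real.sqrt 3 * s)) ^ 2)) s := by
    have h : HasDerivAt (fun u => coth (Real.sqrt 3 * u)) _ s := hch.div hsh hne
    convert h using 1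
    have hc := Real.cosh_sq (Real.sqrt 3 * s)
    rw [show Real.sinh (Real.sqrt 3 * s) * Real.sqrt 3 * Real.sinh (Real.sqrt 3 * s)
        - Real.cosh (Real.sqrt 3 * s) * (Real.cosh (Real.sqrt 3 * s) * Real.sqrt 3)
        = -Real.sqrt 3 from by linear_combination (-Real.sqrt 3) * hc]
    ring
  have hexp : HasDerivAt (fun u => Real.exp (a * u + b * y))
      (Real.exp (a * s + b * y) * a) s := by
    have h1 : HasDerivAt (fun u : ℝ => a * u + b * y) a s := by
      simpa using ((hasDerivAt_id s).const_mul a).add_const (b * y)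
    simpa using h1.exp
  have hfac : HasDerivAt (fun u => -(coth (Real.sqrt 3 * u) - a / Real.sqrt 3))
      (Real.sqrt 3 / (Real.sinh (Real.sqrt 3 * s)) ^ 2) s := by
    simpa [Pi.neg_def] using (hcoth.sub_const (a / Real.sqrt 3)).neg
  have h : HasDerivAt (fun u => -(coth (Real.sqrt 3 * u) - a / Real.sqrt 3) * Real.exp (a * u + b * y)) _ s :=
    hfac.mul hexp
  convert h using 1
  all_goals simp only [g]
  ring

lemma deriv2_x (a b y x : ℝ) (hx : 0 < x) :
    deriv (deriv fun s => g a b y s) x =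
      -(2 * 3 * Real.sinh (Real.sqrt 3 * x) * Real.cosh (Real.sqrt 3 * x))
          / ((Real.sinh (Real.sqrt 3 * x)) ^ 2) ^ 2 * Real.exp (a * x + b * y)
        + Real.sqrt 3 / (Real.sinh (Real.sqrt 3 * x)) ^ 2 * (Real.exp (a * x + b * y) * a)
        + a * (Real.sqrt 3 / (Real.sinh (Real.sqrt 3 * x)) ^ 2 * Real.exp (a * x + b * y)
              + a * g a b y x) := by
  have hev : deriv (fun s => g a b y s) =ᶠ[nhds x]
      (fun s => Real.sqrt 3 / (Real.sinh (Real.sqrt 3 * s)) ^ 2 * Real.exp (a * s + b * y)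
        + a * g a b y s) := by
    filter_upwards [eventually_gt_nhds hx] with s hs
    exact (hg a b y s hs).deriv
  rw [hev.deriv_eq]
  have hne := sinh_ne x hx
  have hne2 : (Real.sinh (Real.sqrt 3 * x)) ^ 2 ≠ 0 := pow_ne_zero 2 hne
  have hlin : HasDerivAt (fun u : ℝ => Real.sqrt 3 * u) (Real.sqrt 3) x := by
    simpa using (hasDerivAt_id x).const_mul (Real.sqrt 3)
  have hsh : HasDerivAt (fun u => Real.sinh (Real.sqrt 3 * u))
      (Real.cosh (Real.sqrt 3 * x) * Real.sqrt 3) x :=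
    (Real.hasDerivAt_sinh _).comp x hlin
  have hsq : HasDerivAt (fun u => (Real.sinh (Real.sqrt 3 * u)) ^ 2)
      (2 * Real.sinh (Real.sqrt 3 * x) ^ 1 * (Real.cosh (Real.sqrt 3 * x) * Real.sqrt 3)) x :=
    hsh.pow 2
  have hquot : HasDerivAt (fun u => Real.sqrt 3 / (Real.sinh (Real.sqrt 3 * u)) ^ 2)
      ((0 * (Real.sinh (Real.sqrt 3 * x)) ^ 2 - Real.sqrt 3 *
        (2 * Real.sinh (Real.sqrt 3 * x) ^ 1 * (Real.cosh (Real.sqrt 3 * x) * Real.sqrt 3)))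
        / ((Real.sinh (Real.sqrt 3 * x)) ^ 2) ^ 2) x :=
    (hasDerivAt_const x (Real.sqrt 3)).div hsq hne2
  have hexp : HasDerivAt (fun u => Real.exp (a * u + b * y))
      (Real.exp (a * x + b * y) * a) x := by
    have h1 : HasDerivAt (fun u : ℝ => a * u + b * y) a x := by
      simpa using ((hasDerivAt_id x).const_mul a).add_const (b * y)
    simpa using h1.exp
  have hterm2 : HasDerivAt (fun s => a * g a b y s)
      (a * (Real.sqrt 3 / (Real.sinh (Real.sqrt 3 * x)) ^ 2 * Real.exp (a * x + b * y)
        + a * g a b y x)) x := (hg a b y x hx).const_mul a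
  have h : HasDerivAt (fun s => Real.sqrt 3 / (Real.sinh (Real.sqrt 3 * s)) ^ 2 * Real.exp (a * s + b * y)
      + a * g a b y s) _ x := (hquot.mul hexp).add hterm2
  rw [h.deriv]
  have h3 : Real.sqrt 3 * Real.sqrt 3 = 3 := Real.mul_self_sqrt (by norm_num)
  linear_combination (-2 * Real.sinh (Real.sqrt 3 * x) * Real.cosh (Real.sqrt 3 * x)
    * Real.exp (a * x + b * y) / ((Real.sinh (Real.sqrt 3 * x)) ^ 2) ^ 2) * h3

lemma deriv2_y (a b x y : ℝ) (hx : 0 < x) :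
    deriv (deriv fun s => g a b s x) y = b * (b * g a b y x) := by
  have hd : ∀ s : ℝ, HasDerivAt (fun u => g a b u x)
      (b * g a b s x) s := by
    intro s
    have h1 : HasDerivAt (fun u : ℝ => a * x + b * u) b s := by
      simpa using ((hasDerivAt_id s).const_mul b).const_add (a * x)
    have h2 : HasDerivAt (fun u => -(coth (Real.sqrt 3 * x) - a / Real.sqrt 3) * Real.exp (a * x + b * u)) _ s :=
      (h1.exp).const_mul (-(coth (Real.sqrt 3 * x) - a / Real.sqrt 3))
    convert h2 using 1
    (all_goals simp only [g]); ring
  have hev : (deriv fun s => g a b s x) = fun s => b * g a b s x := by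
    funext s; exact (hd s).deriv
  rw [hev]
  exact (((hd y).const_mul b)).deriv

lemma key (a b y x : ℝ) (hx : 0 < x) (hab : a ^ 2 + b ^ 2 = 4) :
    deriv (deriv fun s => g a b y s) x + deriv (deriv fun s => g a b s x) y
      = (6 / (Real.sinh (Real.sqrt 3 * x)) ^ 2 + 4) * g a b y x := by
  rw [deriv2_x a b y x hx, deriv2_y a b x y hx]
  have hne := sinh_ne x hx
  have h3 : Real.sqrt 3 * Real.sqrt 3 = 3 := Real.mul_self_sqrt (by norm_num)
  have h3' : Real.sqrt 3 ≠ 0 := by positivity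
  simp only [g, coth]
  field_simp
  linear_combination
    (2 * Real.sinh (Real.sqrt 3 * x) * a) * h3
    - (Real.sinh (Real.sqrt 3 * x) ^ 2 * (Real.sqrt 3 * Real.cosh (Real.sqrt 3 * x)
      - Real.sinh (Real.sqrt 3 * x) * a)) * hab

/-- Every member of the associated family satisfies the affine-sphere equation
`Δ v = (6/sinh²(√3 x) + 4) v` componentwise. -/
theorem associated_family_laplace_case1 :
    ∀ t : ℝ, ∀ x : ℝ, 0 < x → ∀ y : ℝ, ∀ i : Fin 3,
      deriv (deriv fun s => vt t s y i) x + deriv (deriv fun s => vt t x s i) y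
        = (6 / (Real.sinh (Real.sqrt 3 * x)) ^ 2 + 4) * vt t x y i := by
  intro t x hx y i
  have h3 : Real.sqrt 3 * Real.sqrt 3 = 3 := Real.mul_self_sqrt (by norm_num)
  have pyth := Real.sin_sq_add_cos_sq t
  fin_cases i
  · have e1 : (fun s => vt t s y 0) = fun s => g (-(2 * Real.cos t)) (2 * Real.sin t) y s := by
      funext s
      simp only [vt, g, Matrix.cons_val_zero]
      rw [show 2 * (-s * Real.cos t + y * Real.sin t)
          = -(2 * Real.cos t) * s + 2 * Real.sin t * y from by ring]
      ring
    have e2 : (fun s => vt t x s 0) = fun s => g (-(2 * Real.cos t)) (2 * Real.sin t) s x := by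
      funext s
      simp only [vt, g, Matrix.cons_val_zero]
      rw [show 2 * (-x * Real.cos t + s * Real.sin t)
          = -(2 * Real.cos t) * x + 2 * Real.sin t * s from by ring]
      ring
    have e3 : vt t x y 0 = g (-(2 * Real.cos t)) (2 * Real.sin t) y x := by
      simp only [vt, g, Matrix.cons_val_zero]
      rw [show 2 * (-x * Real.cos t + y * Real.sin t)
          = -(2 * Real.cos t) * x + 2 * Real.sin t * y from by ring]
      ring
    show deriv (deriv fun s => vt t s y 0) x + deriv (deriv fun s => vt t x s 0) y
      = (6 / (Real.sinh (Real.sqrt 3 * x)) ^ 2 + 4) * vt t x y 0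
    rw [e1, e2, e3]
    exact key _ _ y x hx (by linear_combination 4 * pyth)
  · have e1 : (fun s => vt t s y 1) = fun s =>
        g (Real.cos t - Real.sqrt 3 * Real.sin t) (-Real.sin t - Real.sqrt 3 * Real.cos t) y s := by
      funext s
      simp only [vt, g, Matrix.cons_val_one, Matrix.head_cons, Matrix.cons_val_zero]
    have e2 : (fun s => vt t x s 1) = fun s =>
        g (Real.cos t - Real.sqrt 3 * Real.sin t) (-Real.sin t - Real.sqrt 3 * Real.cos t) s x := by
      funext s
      simp only [vt, g, Matrix.cons_val_one, Matrix.head_cons, Matrix.cons_val_zero]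
    have e3 : vt t x y 1
        = g (Real.cos t - Real.sqrt 3 * Real.sin t) (-Real.sin t - Real.sqrt 3 * Real.cos t) y x := by
      simp only [vt, g, Matrix.cons_val_one, Matrix.head_cons, Matrix.cons_val_zero]
    show deriv (deriv fun s => vt t s y 1) x + deriv (deriv fun s => vt t x s 1) y
      = (6 / (Real.sinh (Real.sqrt 3 * x)) ^ 2 + 4) * vt t x y 1
    rw [e1, e2, e3]
    exact key _ _ y x hx
      (by linear_combination (1 + Real.sqrt 3 * Real.sqrt 3) * pyth + h3)
  · have e1 : (fun s => vt t s y 2) = fun s =>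
        g (Real.cos t + Real.sqrt 3 * Real.sin t) (-Real.sin t + Real.sqrt 3 * Real.cos t) y s := by
      funext s
      simp only [vt, g]
      rfl
    have e2 : (fun s => vt t x s 2) = fun s =>
        g (Real.cos t + Real.sqrt 3 * Real.sin t) (-Real.sin t + Real.sqrt 3 * Real.cos t) s x := by
      funext s
      simp only [vt, g]
      rfl
    have e3 : vt t x y 2
        = g (Real.cos t + Real.sqrt 3 * Real.sin t) (-Real.sin t + Real.sqrt 3 * Real.cos t) y x := by
      simp only [vt, g]
      rfl
    show deriv (deriv fun s => vt t s y 2) x + deriv (deriv fun s => vt t x s 2) y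
      = (6 / (Real.sinh (Real.sqrt 3 * x)) ^ 2 + 4) * vt t x y 2
    rw [e1, e2, e3]
    exact key _ _ y x hx
      (by linear_combination (1 + Real.sqrt 3 * Real.sqrt 3) * pyth + h3)
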